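/- arXiv:2304.05908 — 3 statements merged into one kernel-verified Lean document; each statement's English description precedes it below -/
import Mathlib

section
/- Let G be the complete graph on q ≥ 2 vertices with pairwise distinct positive edge weights, and let T be its (unique) maximum spanning tree. Then an edge weight w_ij is a jump point of the zeroth Betti curve ε ↦ β₀(ε) (i.e., a birth value of a connected component in the graph filtration) if and only if the edge {i,j} belongs to T. Consequently the birth set B has exactly q − 1 elements. -/
/-- The threshold graph of a weighted graph `H`: keep only edges of `H` whose
weight strictly exceeds `ε`. -/
def thresholdOf {q : ℕ} (H : SimpleGraph (Fin q)) (w : Sym2 (Fin q) → ℝ) (ε : ℝ) :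
    SimpleGraph (Fin q) where
  Adj i j := H.Adj i j ∧ ε < w s(i, j)
  symm := ⟨fun i j h => ⟨h.1.symm, by rw [Sym2.eq_swap]; exact h.2⟩⟩
  loopless := ⟨fun i h => H.loopless.irrefl i h.1⟩

/-- The threshold graph of the complete weighted graph on `Fin q`. -/
def thresholdGraph {q : ℕ} (w : Sym2 (Fin q) → ℝ) (ε : ℝ) : SimpleGraph (Fin q) :=
  thresholdOf ⊤ w ε

/-- `β₀(ε)`: the number of connected components of the threshold graph. -/
noncomputable def betti0 {q : ℕ} (w : Sym2 (Fin q) → ℝ) (ε : ℝ) : ℕ :=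
  Nat.card (thresholdGraph w ε).ConnectedComponent

/-- `E(ε)`: the number of edges of the threshold graph. -/
noncomputable def numEdges {q : ℕ} (w : Sym2 (Fin q) → ℝ) (ε : ℝ) : ℕ :=
  (thresholdGraph w ε).edgeSet.ncard

/-- `β₁(ε) = E(ε) − q + β₀(ε)`: the cycle rank of the threshold graph. -/
noncomputable def betti1 {q : ℕ} (w : Sym2 (Fin q) → ℝ) (ε : ℝ) : ℤ :=
  (numEdges w ε : ℤ) - (q : ℤ) + (betti0 w ε : ℤ)

/-- A point `ε` is a jump point of `f` if `f` is not constant on any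
neighborhood of `ε`. -/
def IsJump {β : Type*} (f : ℝ → β) (ε : ℝ) : Prop :=
  ∀ δ > 0, ∃ x : ℝ, |x - ε| < δ ∧ f x ≠ f ε

/-- `T` is a maximum spanning tree of `G` w.r.t. the weights `w`: a spanning tree
of `G` whose total edge weight is maximal among all spanning trees of `G`. -/
def IsMaxSpanningTree {V : Type*} (G : SimpleGraph V) (w : Sym2 V → ℝ)
    (T : SimpleGraph V) : Prop :=
  T ≤ G ∧ T.IsTree ∧
    ∀ T' : SimpleGraph V, T' ≤ G → T'.IsTree →
      (∑ᶠ e ∈ T'.edgeSet, w e) ≤ ∑ᶠ e ∈ T.edgeSet, w e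



open SimpleGraph

-- ## Auxiliary lemmas

section WalkAux

variable {V : Type*}

lemma aux_reachable_of_forall_adj {H G : SimpleGraph V}
    (h : ∀ a b : V, H.Adj a b → G.Reachable a b) :
    ∀ {x y : V}, H.Reachable x y → G.Reachable x y := by
  intro x y hr
  obtain ⟨p⟩ := hr
  induction p with
  | nil => exact Reachable.refl _
  | cons hadj _ ih => exact (h _ _ hadj).trans ih

lemma aux_exists_crossing {H : SimpleGraph V} (P : V → Prop) :
    ∀ {u v : V}, H.Walk u v → P u → ¬ P v → ∃ a b : V, H.Adj a b ∧ P a ∧ ¬ P b := by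
  intro u v p
  induction p with
  | nil => exact fun h h' => absurd h h'
  | @cons a b c hadj p ih =>
    intro hu hv
    by_cases hx : P b
    · exact ih hx hv
    · exact ⟨a, b, hadj, hu, hx⟩

lemma aux_reachable_delete_or {H : SimpleGraph V} {x y : V} :
    ∀ {v u : V}, H.Walk v u →
      (H.deleteEdges {s(x, y)}).Reachable v u ∨ (H.deleteEdges {s(x, y)}).Reachable v x ∨
        (H.deleteEdges {s(x, y)}).Reachable v y := by
  intro v u p
  induction p with
  | nil => exact Or.inl (Reachable.refl _)
  | @cons a b c hadj p ih =>
    by_cases he : s(a, b) = s(x, y)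
    · rw [Sym2.eq_iff] at he
      rcases he with ⟨rfl, rfl⟩ | ⟨rfl, rfl⟩
      · exact Or.inr (Or.inl (Reachable.refl _))
      · exact Or.inr (Or.inr (Reachable.refl _))
    · have hadj' : (H.deleteEdges {s(x, y)}).Adj a b := by
        rw [deleteEdges_adj]
        exact ⟨hadj, by simpa using he⟩
      rcases ih with h | h | h
      · exact Or.inl (hadj'.reachable.trans h)
      · exact Or.inr (Or.inl (hadj'.reachable.trans h))
      · exact Or.inr (Or.inr (hadj'.reachable.trans h))

lemma aux_reachable_delete_or' {H : SimpleGraph V} {x y v : V} (p : H.Walk v x) :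
    (H.deleteEdges {s(x, y)}).Reachable v x ∨ (H.deleteEdges {s(x, y)}).Reachable v y := by
  rcases aux_reachable_delete_or (y := y) p with h | h | h
  · exact Or.inl h
  · exact Or.inl h
  · exact Or.inr h

lemma aux_isAcyclic_mono {G H : SimpleGraph V} (hle : G ≤ H) (hH : H.IsAcyclic) :
    G.IsAcyclic :=
  fun _ c hc => hH (c.mapLe hle) (hc.mapLe hle)

lemma aux_addEdge_isAcyclic {H : SimpleGraph V} (hH : H.IsAcyclic)
    {x y : V} (hr : ¬ H.Reachable x y) :
    (H ⊔ fromEdgeSet {s(x, y)}).IsAcyclic := by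
  intro v c hc
  by_cases he : s(x, y) ∈ c.edges
  · have h2 := (adj_and_reachable_delete_edges_iff_exists_cycle.mpr ⟨v, c, hc, he⟩).2
    apply hr
    refine aux_reachable_of_forall_adj ?_ h2
    intro a b hab
    rw [deleteEdges_adj] at hab
    obtain ⟨hab1, hab2⟩ := hab
    rcases (sup_adj _ _ _ _).mp hab1 with h3 | h3
    · exact h3.reachable
    · exact absurd ((fromEdgeSet_adj _).mp h3).1 hab2
  · have hsub : ∀ e ∈ c.edges, e ∈ H.edgeSet := by
      intro e hec
      have h3 := c.edges_subset_edgeSet hec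
      rw [edgeSet_sup, Set.mem_union, edgeSet_fromEdgeSet] at h3
      rcases h3 with h3 | h3
      · exact h3
      · exact absurd ((Set.mem_singleton_iff.mp h3.1) ▸ hec) he
    exact hH (c.transfer H hsub) (hc.transfer hsub)

end WalkAux

lemma aux_finsum_mem_eq_toFinset_sum {α : Type*} (f : α → ℝ) (s : Set α) (hs : s.Finite) :
    (∑ᶠ e ∈ s, f e) = ∑ e ∈ hs.toFinset, f e := by
  rw [← finsum_mem_coe_finset, Set.Finite.coe_toFinset]

lemma aux_card_lt_of_edge {q : ℕ} {G H : SimpleGraph (Fin q)} (hle : G ≤ H)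
    {i j : Fin q} (hnr : ¬ G.Reachable i j) (hr : H.Reachable i j) :
    Nat.card H.ConnectedComponent < Nat.card G.ConnectedComponent := by
  classical
  haveI : Fintype G.ConnectedComponent := Fintype.ofFinite _
  haveI : Fintype H.ConnectedComponent := Fintype.ofFinite _
  rw [Nat.card_eq_fintype_card, Nat.card_eq_fintype_card]
  refine Fintype.card_lt_of_surjective_not_injective
    (ConnectedComponent.map (Hom.ofLE hle)) ?_ ?_
  · intro c
    refine c.ind fun v => ?_
    exact ⟨G.connectedComponentMk v, by
      simp [ConnectedComponent.map_mk, Hom.ofLE_apply]⟩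
  · intro hinj
    apply hnr
    have hmaps : (ConnectedComponent.map (Hom.ofLE hle)
          (G.connectedComponentMk i))
        = ConnectedComponent.map (Hom.ofLE hle) (G.connectedComponentMk j) := by
      simp only [ConnectedComponent.map_mk, Hom.ofLE_apply]
      exact ConnectedComponent.eq.mpr hr
    exact ConnectedComponent.eq.mp (hinj hmaps)

lemma thresholdGraph_adj {q : ℕ} (w : Sym2 (Fin q) → ℝ) (ε : ℝ) (a b : Fin q) :
    (thresholdGraph w ε).Adj a b ↔ a ≠ b ∧ ε < w s(a, b) := by
  show (⊤ : SimpleGraph (Fin q)).Adj a b ∧ ε < w s(a, b) ↔ _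
  rw [top_adj]

lemma mem_thresholdGraph_edgeSet {q : ℕ} (w : Sym2 (Fin q) → ℝ) (ε : ℝ) (e : Sym2 (Fin q)) :
    e ∈ (thresholdGraph w ε).edgeSet ↔ ¬ e.IsDiag ∧ ε < w e := by
  induction e using Sym2.ind with
  | _ a b =>
    rw [mem_edgeSet, thresholdGraph_adj, Sym2.mk_isDiag_iff]

/-- `G_ε⁻`: the graph with edges of weight `≥ ε`. -/
def thrGE {q : ℕ} (w : Sym2 (Fin q) → ℝ) (ε : ℝ) : SimpleGraph (Fin q) where
  Adj i j := i ≠ j ∧ ε ≤ w s(i, j)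
  symm := ⟨fun i j h => ⟨h.1.symm, by rw [Sym2.eq_swap]; exact h.2⟩⟩
  loopless := ⟨fun i h => h.1 rfl⟩

lemma thrGE_adj {q : ℕ} (w : Sym2 (Fin q) → ℝ) (ε : ℝ) (a b : Fin q) :
    (thrGE w ε).Adj a b ↔ a ≠ b ∧ ε ≤ w s(a, b) := Iff.rfl

lemma aux_sum_swap_gt {q : ℕ} (w : Sym2 (Fin q) → ℝ) {T : SimpleGraph (Fin q)}
    {eo en : Sym2 (Fin q)} (ho : eo ∈ T.edgeSet) (hn : en ∉ T.edgeSet)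
    (hnd : ¬ en.IsDiag) (hw : w eo < w en) :
    (∑ᶠ e ∈ T.edgeSet, w e) < ∑ᶠ e ∈ ((T.deleteEdges {eo}) ⊔ fromEdgeSet {en}).edgeSet, w e := by
  classical
  have hfin1 : T.edgeSet.Finite := Set.toFinite _
  have hE : ((T.deleteEdges {eo}) ⊔ fromEdgeSet {en}).edgeSet = insert en (T.edgeSet \ {eo}) := by
    rw [edgeSet_sup, edgeSet_deleteEdges, edgeSet_fromEdgeSet]
    ext e
    simp only [Set.mem_union, Set.mem_diff, Set.mem_singleton_iff, Set.mem_insert_iff,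
      Set.mem_setOf_eq]
    constructor
    · rintro (⟨h1, h2⟩ | ⟨rfl, -⟩)
      · exact Or.inr ⟨h1, h2⟩
      · exact Or.inl rfl
    · rintro (rfl | ⟨h1, h2⟩)
      · exact Or.inr ⟨rfl, hnd⟩
      · exact Or.inl ⟨h1, h2⟩
  have hfin2 : (insert en (T.edgeSet \ {eo})).Finite := Set.toFinite _
  rw [hE, aux_finsum_mem_eq_toFinset_sum w _ hfin2, aux_finsum_mem_eq_toFinset_sum w _ hfin1]
  have htf : hfin2.toFinset = insert en (hfin1.toFinset.erase eo) := by
    ext e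
    simp only [Set.Finite.mem_toFinset, Set.mem_insert_iff, Set.mem_diff, Set.mem_singleton_iff,
      Finset.mem_insert, Finset.mem_erase]
    tauto
  rw [htf, Finset.sum_insert (by
    simp only [Finset.mem_erase, Set.Finite.mem_toFinset]
    exact fun h => hn h.2)]
  have h3 := Finset.sum_erase_add hfin1.toFinset w (by simpa using ho)
  linarith

lemma aux_isJump_iff {q : ℕ} (w : Sym2 (Fin q) → ℝ) (ε : ℝ) :
    IsJump (betti0 w) ε ↔ Nat.card (thrGE w ε).ConnectedComponent ≠ betti0 w ε := by
  classical
  obtain ⟨δ, hδpos, hδ⟩ : ∃ δ > 0, ∀ e : Sym2 (Fin q), w e ≠ ε → δ ≤ |w e - ε| := by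
    set D := (Finset.univ.image w).filter (· ≠ ε) with hD
    rcases D.eq_empty_or_nonempty with h | h
    · refine ⟨1, one_pos, fun e hne => ?_⟩
      exfalso
      have hmem : w e ∈ D := Finset.mem_filter.mpr
        ⟨Finset.mem_image_of_mem w (Finset.mem_univ e), hne⟩
      rw [h] at hmem
      exact Finset.notMem_empty _ hmem
    · have hne' := h.image (fun y => |y - ε|)
      have hmem := (D.image fun y => |y - ε|).min'_mem hne'
      rw [Finset.mem_image] at hmem
      obtain ⟨y, hyD, hym⟩ := hmem
      have hy : y ≠ ε := (Finset.mem_filter.mp hyD).2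
      refine ⟨(D.image fun y => |y - ε|).min' hne', ?_, ?_⟩
      · rw [← hym]
        exact abs_pos.mpr (sub_ne_zero.mpr hy)
      · intro e hne
        exact Finset.min'_le _ _ (Finset.mem_image_of_mem _ (Finset.mem_filter.mpr
          ⟨Finset.mem_image_of_mem w (Finset.mem_univ e), hne⟩))
  have hup : ∀ x : ℝ, ε ≤ x → x < ε + δ → thresholdGraph w x = thresholdGraph w ε := by
    intro x hx1 hx2
    ext a b
    rw [thresholdGraph_adj, thresholdGraph_adj]
    constructor
    · rintro ⟨h1, h2⟩
      exact ⟨h1, lt_of_le_of_lt hx1 h2⟩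
    · rintro ⟨h1, h2⟩
      refine ⟨h1, ?_⟩
      by_cases hne : w s(a, b) = ε
      · rw [hne] at h2
        exact absurd h2 (lt_irrefl _)
      · have h3 := hδ _ hne
        rw [abs_of_pos (sub_pos.mpr h2)] at h3
        linarith
  have hdown : ∀ x : ℝ, ε - δ < x → x < ε → thresholdGraph w x = thrGE w ε := by
    intro x hx1 hx2
    ext a b
    rw [thresholdGraph_adj, thrGE_adj]
    constructor
    · rintro ⟨h1, h2⟩
      refine ⟨h1, ?_⟩
      by_cases hne : w s(a, b) = ε
      · exact le_of_eq hne.symm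
      · have h3 := hδ _ hne
        by_contra hlt
        push_neg at hlt
        rw [abs_of_neg (sub_neg.mpr (lt_of_le_of_ne (le_of_lt hlt) hne))] at h3
        linarith
    · rintro ⟨h1, h2⟩
      exact ⟨h1, lt_of_lt_of_le hx2 h2⟩
  constructor
  · intro hj
    obtain ⟨x, hx1, hx2⟩ := hj δ hδpos
    rcases le_or_gt ε x with hc | hc
    · exfalso
      apply hx2
      have hxlt : x < ε + δ := by
        rw [abs_of_nonneg (sub_nonneg.mpr hc)] at hx1
        linarith
      simp only [betti0]
      rw [hup x hc hxlt]
    · have hx3 : ε - δ < x := by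
        rw [abs_of_neg (by linarith : x - ε < 0)] at hx1
        linarith
      have heq : betti0 w x = Nat.card (thrGE w ε).ConnectedComponent := by
        simp only [betti0]
        rw [hdown x hx3 hc]
      rwa [heq] at hx2
  · intro hne
    intro δ' hδ'
    have hm0 : 0 < min δ δ' / 2 := half_pos (lt_min hδpos hδ')
    have hmδ : min δ δ' / 2 < δ :=
      lt_of_lt_of_le (half_lt_self (lt_min hδpos hδ')) (min_le_left _ _)
    have hmδ' : min δ δ' / 2 < δ' :=
      lt_of_lt_of_le (half_lt_self (lt_min hδpos hδ')) (min_le_right _ _)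
    refine ⟨ε - min δ δ' / 2, ?_, ?_⟩
    · have h4 : ε - min δ δ' / 2 - ε = -(min δ δ' / 2) := by ring
      rw [h4, abs_neg, abs_of_pos hm0]
      exact hmδ'
    · have heq : betti0 w (ε - min δ δ' / 2) = Nat.card (thrGE w ε).ConnectedComponent := by
        simp only [betti0]
        rw [hdown (ε - min δ δ' / 2) (by linarith) (by linarith)]
      rw [heq]
      exact hne

lemma aux_no_jump_of_no_weight {q : ℕ} (w : Sym2 (Fin q) → ℝ) (ε : ℝ)
    (h : ∀ e : Sym2 (Fin q), ¬ e.IsDiag → w e ≠ ε) :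
    ¬ IsJump (betti0 w) ε := by
  rw [aux_isJump_iff]
  intro hne
  apply hne
  have hgr : thrGE w ε = thresholdGraph w ε := by
    ext a b
    rw [thrGE_adj, thresholdGraph_adj]
    constructor
    · rintro ⟨h1, h2⟩
      refine ⟨h1, lt_of_le_of_ne h2 ?_⟩
      exact fun hc => (h s(a, b) (fun hd => h1 (Sym2.mk_isDiag_iff.mp hd)) hc.symm).elim
    · rintro ⟨h1, h2⟩
      exact ⟨h1, le_of_lt h2⟩
  simp only [betti0]
  rw [hgr]

lemma aux_jump_at_edge {q : ℕ} (w : Sym2 (Fin q) → ℝ)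
    (hinj : ∀ e f : Sym2 (Fin q), ¬ e.IsDiag → ¬ f.IsDiag → w e = w f → e = f)
    {i j : Fin q} (hij : i ≠ j) :
    IsJump (betti0 w) (w s(i, j)) ↔ ¬ (thresholdGraph w (w s(i, j))).Reachable i j := by
  classical
  rw [aux_isJump_iff]
  constructor
  · intro hne
    by_contra hr
    apply hne
    have hrel : ∀ a b : Fin q, (thrGE w (w s(i, j))).Reachable a b ↔
        (thresholdGraph w (w s(i, j))).Reachable a b := by
      intro a b
      constructor
      · refine aux_reachable_of_forall_adj ?_
        intro a' b' hab
        obtain ⟨h1, h2⟩ := (thrGE_adj w _ a' b').mp hab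
        rcases lt_or_eq_of_le h2 with h3 | h3
        · exact Adj.reachable ((thresholdGraph_adj w _ a' b').mpr ⟨h1, h3⟩)
        · have heq : s(a', b') = s(i, j) :=
            hinj _ _ (fun hd => h1 (Sym2.mk_isDiag_iff.mp hd))
              (fun hd => hij (Sym2.mk_isDiag_iff.mp hd)) h3.symm
          rw [Sym2.eq_iff] at heq
          rcases heq with ⟨rfl, rfl⟩ | ⟨rfl, rfl⟩
          · exact hr
          · exact hr.symm
      · refine Reachable.mono ?_
        intro a' b' hab
        obtain ⟨h1, h2⟩ := (thresholdGraph_adj w _ a' b').mp hab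
        exact (thrGE_adj w _ a' b').mpr ⟨h1, le_of_lt h2⟩
    simp only [betti0]
    exact Nat.card_congr (Quot.congrRight hrel)
  · intro hnr
    have hle : thresholdGraph w (w s(i, j)) ≤ thrGE w (w s(i, j)) := by
      intro a' b' hab
      obtain ⟨h1, h2⟩ := (thresholdGraph_adj w _ a' b').mp hab
      exact (thrGE_adj w _ a' b').mpr ⟨h1, le_of_lt h2⟩
    have hreach : (thrGE w (w s(i, j))).Reachable i j :=
      Adj.reachable ((thrGE_adj w _ i j).mpr ⟨hij, le_refl _⟩)
    simp only [betti0]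
    exact Nat.ne_of_lt (aux_card_lt_of_edge hle hnr hreach)

lemma aux_mst_char {q : ℕ} (w : Sym2 (Fin q) → ℝ)
    (hinj : ∀ e f : Sym2 (Fin q), ¬ e.IsDiag → ¬ f.IsDiag → w e = w f → e = f)
    {T : SimpleGraph (Fin q)} (hT : IsMaxSpanningTree ⊤ w T)
    {i j : Fin q} (hij : i ≠ j) :
    s(i, j) ∈ T.edgeSet ↔ ¬ (thresholdGraph w (w s(i, j))).Reachable i j := by
  classical
  obtain ⟨-, htree, hmax⟩ := hT
  constructor
  · -- e ∈ T → endpoints not reachable above w e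
    intro he hr
    have hbr : ¬ (T.deleteEdges {s(i, j)}).Reachable i j :=
      (isBridge_iff.mp (isAcyclic_iff_forall_edge_isBridge.mp htree.IsAcyclic he))
    obtain ⟨p⟩ := hr
    obtain ⟨a, b, hab, hPa, hPb⟩ :=
      aux_exists_crossing (fun v => (T.deleteEdges {s(i, j)}).Reachable i v) p
        (Reachable.refl i) hbr
    rw [thresholdGraph_adj] at hab
    obtain ⟨hne_ab, hwab⟩ := hab
    have hfne : s(a, b) ≠ s(i, j) := fun h => by
      rw [h] at hwab; exact lt_irrefl _ hwab
    have hfT : s(a, b) ∉ T.edgeSet := by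
      intro hmem
      refine hPb (hPa.trans (Adj.reachable ?_))
      rw [deleteEdges_adj]
      exact ⟨(mem_edgeSet T).mp hmem, by simpa using hfne⟩
    have hnrab : ¬ (T.deleteEdges {s(i, j)}).Reachable a b := fun h => hPb (hPa.trans h)
    have hside : ∀ v : Fin q,
        (T.deleteEdges {s(i, j)}).Reachable v i ∨ (T.deleteEdges {s(i, j)}).Reachable v j := by
      intro v
      obtain ⟨pv⟩ := htree.isConnected.preconnected v i
      exact aux_reachable_delete_or' pv
    have hbj : (T.deleteEdges {s(i, j)}).Reachable b j := by
      rcases hside b with h | h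
      · exact absurd h.symm hPb
      · exact h
    have hacy : ((T.deleteEdges {s(i, j)}) ⊔ fromEdgeSet {s(a, b)}).IsAcyclic :=
      aux_addEdge_isAcyclic (aux_isAcyclic_mono (deleteEdges_le _) htree.IsAcyclic) hnrab
    have hle0 : T.deleteEdges {s(i, j)} ≤ (T.deleteEdges {s(i, j)}) ⊔ fromEdgeSet {s(a, b)} :=
      le_sup_left
    have hedge : ((T.deleteEdges {s(i, j)}) ⊔ fromEdgeSet {s(a, b)}).Adj a b :=
      (sup_adj _ _ _ _).mpr (Or.inr ((fromEdgeSet_adj _).mpr ⟨rfl, hne_ab⟩))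
    have hconn : ((T.deleteEdges {s(i, j)}) ⊔ fromEdgeSet {s(a, b)}).Connected := by
      have hji : ((T.deleteEdges {s(i, j)}) ⊔ fromEdgeSet {s(a, b)}).Reachable j i :=
        ((hbj.mono hle0).symm.trans hedge.symm.reachable).trans (hPa.mono hle0).symm
      have hri : ∀ v : Fin q,
          ((T.deleteEdges {s(i, j)}) ⊔ fromEdgeSet {s(a, b)}).Reachable v i := by
        intro v
        rcases hside v with h | h
        · exact h.mono hle0
        · exact (h.mono hle0).trans hji.symm.symm
      haveI : Nonempty (Fin q) := ⟨i⟩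
      exact ⟨fun u v => (hri u).trans (hri v).symm⟩
    have hsum := hmax _ le_top ⟨hconn, hacy⟩
    have hlt := aux_sum_swap_gt w he hfT
      (fun h => hne_ab (Sym2.mk_isDiag_iff.mp h)) hwab
    exact absurd hsum (not_le.mpr hlt)
  · -- e ∉ T → endpoints reachable above w e  (contrapositive)
    intro hnr
    by_contra hnotmem
    obtain ⟨p0⟩ := htree.isConnected.preconnected i j
    set pp := p0.toPath with hppdef
    obtain ⟨f, hfmem, hwf⟩ : ∃ f ∈ (pp : T.Walk i j).edges, ¬ (w s(i, j) < w f) := by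
      by_contra hall
      push_neg at hall
      apply hnr
      refine Walk.reachable ((pp : T.Walk i j).transfer (thresholdGraph w (w s(i, j)))
        (fun e hee => ?_))
      exact (mem_thresholdGraph_edgeSet w _ e).mpr
        ⟨T.not_isDiag_of_mem_edgeSet (Walk.edges_subset_edgeSet _ hee), hall e hee⟩
    revert hfmem hwf
    induction f using Sym2.ind with
    | _ a b =>
    intro hfmem hwf
    have hfT : s(a, b) ∈ T.edgeSet := Walk.edges_subset_edgeSet _ hfmem
    have hab : a ≠ b := fun h => T.not_isDiag_of_mem_edgeSet hfT (Sym2.mk_isDiag_iff.mpr h)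
    have hfne : s(a, b) ≠ s(i, j) := fun h => hnotmem (h ▸ hfT)
    have hwlt : w s(a, b) < w s(i, j) := by
      refine lt_of_le_of_ne (not_lt.mp hwf) (fun h => hfne ?_)
      exact hinj _ _ (fun hd => hab (Sym2.mk_isDiag_iff.mp hd))
        (fun hd => hij (Sym2.mk_isDiag_iff.mp hd)) h
    -- i and j are separated in T minus f
    have hfr : ¬ (T.deleteEdges {s(a, b)}).Reachable i j := by
      intro h
      obtain ⟨q0⟩ := h
      have hsub : ∀ e ∈ (q0.toPath : (T.deleteEdges {s(a, b)}).Walk i j).edges,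
          e ∈ T.edgeSet := by
        intro e hee
        have h4 := Walk.edges_subset_edgeSet _ hee
        rw [edgeSet_deleteEdges] at h4
        exact h4.1
      have hq2 : (((q0.toPath : (T.deleteEdges {s(a, b)}).Walk i j)).transfer T hsub).IsPath :=
        q0.toPath.2.transfer hsub
      have huniq := htree.IsAcyclic.path_unique (⟨_, hq2⟩ : T.Path i j) pp
      have hmem2 : s(a, b) ∈
          (((q0.toPath : (T.deleteEdges {s(a, b)}).Walk i j)).transfer T hsub).edges := by
        have hval : ((q0.toPath : (T.deleteEdges {s(a, b)}).Walk i j).transfer T hsub)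
            = (pp : T.Walk i j) := congrArg Subtype.val huniq
        rw [hval]
        exact hfmem
      rw [Walk.edges_transfer] at hmem2
      have h5 := Walk.edges_subset_edgeSet _ hmem2
      rw [edgeSet_deleteEdges] at h5
      exact h5.2 rfl
    have hside : ∀ v : Fin q,
        (T.deleteEdges {s(a, b)}).Reachable v a ∨ (T.deleteEdges {s(a, b)}).Reachable v b := by
      intro v
      obtain ⟨pv⟩ := htree.isConnected.preconnected v a
      exact aux_reachable_delete_or' pv
    have hcases : ((T.deleteEdges {s(a, b)}).Reachable i a ∧
          (T.deleteEdges {s(a, b)}).Reachable j b)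
        ∨ ((T.deleteEdges {s(a, b)}).Reachable i b ∧
          (T.deleteEdges {s(a, b)}).Reachable j a) := by
      rcases hside i with h1 | h1 <;> rcases hside j with h2 | h2
      · exact absurd (h1.trans h2.symm) hfr
      · exact Or.inl ⟨h1, h2⟩
      · exact Or.inr ⟨h1, h2⟩
      · exact absurd (h1.trans h2.symm) hfr
    have hacy : ((T.deleteEdges {s(a, b)}) ⊔ fromEdgeSet {s(i, j)}).IsAcyclic :=
      aux_addEdge_isAcyclic (aux_isAcyclic_mono (deleteEdges_le _) htree.IsAcyclic) hfr
    have hedge : ((T.deleteEdges {s(a, b)}) ⊔ fromEdgeSet {s(i, j)}).Adj i j :=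
      (sup_adj _ _ _ _).mpr (Or.inr ((fromEdgeSet_adj _).mpr ⟨rfl, hij⟩))
    have hle0 : T.deleteEdges {s(a, b)} ≤ (T.deleteEdges {s(a, b)}) ⊔ fromEdgeSet {s(i, j)} :=
      le_sup_left
    have hconn : ((T.deleteEdges {s(a, b)}) ⊔ fromEdgeSet {s(i, j)}).Connected := by
      have hri : ∀ v : Fin q,
          ((T.deleteEdges {s(a, b)}) ⊔ fromEdgeSet {s(i, j)}).Reachable v i := by
        intro v
        rcases hcases with ⟨h1, h2⟩ | ⟨h1, h2⟩ <;> rcases hside v with h3 | h3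
        · exact (h3.mono hle0).trans (h1.mono hle0).symm
        · exact ((h3.mono hle0).trans (h2.mono hle0).symm).trans hedge.symm.reachable
        · exact ((h3.mono hle0).trans (h2.mono hle0).symm).trans hedge.symm.reachable
        · exact (h3.mono hle0).trans (h1.mono hle0).symm
      haveI : Nonempty (Fin q) := ⟨i⟩
      exact ⟨fun u v => (hri u).trans (hri v).symm⟩
    have hsum := hmax _ le_top ⟨hconn, hacy⟩
    have hlt := aux_sum_swap_gt w hfT hnotmem
      (fun h => hij (Sym2.mk_isDiag_iff.mp h)) hwlt
    exact absurd hsum (not_le.mpr hlt)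

/-- **Birth values are the maximum-spanning-tree edge weights.** For the complete
graph on `q ≥ 2` vertices with pairwise distinct positive edge weights and maximum
spanning tree `T`, an edge weight `w s(i,j)` is a jump point of the Betti-0 curve
iff the edge `{i,j}` lies in `T`; consequently the birth set has exactly `q − 1`
elements. -/
theorem birth_set_eq_mst (q : ℕ) (hq : 2 ≤ q) (w : Sym2 (Fin q) → ℝ)
    (hpos : ∀ e : Sym2 (Fin q), ¬ e.IsDiag → 0 < w e)
    (hinj : ∀ e f : Sym2 (Fin q), ¬ e.IsDiag → ¬ f.IsDiag → w e = w f → e = f)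
    (T : SimpleGraph (Fin q)) (hT : IsMaxSpanningTree ⊤ w T) :
    (∀ i j : Fin q, i ≠ j →
      (IsJump (betti0 w) (w s(i, j)) ↔ s(i, j) ∈ T.edgeSet)) ∧
    {ε : ℝ | IsJump (betti0 w) ε}.ncard = q - 1 := by
  classical
  have hmain : ∀ i j : Fin q, i ≠ j →
      (IsJump (betti0 w) (w s(i, j)) ↔ s(i, j) ∈ T.edgeSet) := by
    intro i j hij
    rw [aux_jump_at_edge w hinj hij]
    exact (aux_mst_char w hinj hT hij).symm
  refine ⟨hmain, ?_⟩
  have hset : {ε : ℝ | IsJump (betti0 w) ε} = w '' T.edgeSet := by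
    ext ε
    simp only [Set.mem_setOf_eq, Set.mem_image]
    constructor
    · intro hj
      obtain ⟨e, hnd, hwe⟩ : ∃ e : Sym2 (Fin q), ¬ e.IsDiag ∧ w e = ε := by
        by_contra hcon
        push_neg at hcon
        exact aux_no_jump_of_no_weight w ε hcon hj
      revert hnd hwe
      induction e using Sym2.ind with
      | _ a b =>
      intro hnd hwe
      have hab : a ≠ b := fun h => hnd (Sym2.mk_isDiag_iff.mpr h)
      have hj' : IsJump (betti0 w) (w s(a, b)) := by rw [hwe]; exact hj
      exact ⟨s(a, b), (hmain a b hab).mp hj', hwe⟩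
    · rintro ⟨e, heT, hwe⟩
      have hnd := T.not_isDiag_of_mem_edgeSet heT
      revert heT hwe hnd
      induction e using Sym2.ind with
      | _ a b =>
      intro heT hwe hnd
      have hab : a ≠ b := fun h => hnd (Sym2.mk_isDiag_iff.mpr h)
      rw [← hwe]
      exact (hmain a b hab).mpr heT
  rw [hset, Set.ncard_image_of_injOn (fun e heT f hfT hwef =>
    hinj e f (T.not_isDiag_of_mem_edgeSet heT) (T.not_isDiag_of_mem_edgeSet hfT) hwef)]
  haveI : Fintype T.edgeSet := Fintype.ofFinite _
  have hcard := hT.2.1.card_edgeFinset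
  rw [Fintype.card_fin] at hcard
  have hnc : T.edgeSet.ncard = T.edgeFinset.card := by
    rw [Set.ncard_eq_toFinset_card']
    congr 1
  omega
end

section
/- Let G be the complete graph on q ≥ 2 vertices with pairwise distinct positive edge weights, and let T be its (unique) maximum spanning tree. Then an edge weight w_ij is a jump point of the first Betti curve ε ↦ β₁(ε) (i.e., a death value of a cycle in the graph filtration) if and only if the edge {i,j} does not belong to T. Consequently the death set D has exactly (q−1)(q−2)/2 elements. -/
open SimpleGraph

section AuxProofs

variable {V : Type*}

lemma reachable_of_forall_adj {G H : SimpleGraph V}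
    (h : ∀ a b : V, G.Adj a b → H.Reachable a b) {u v : V} (huv : G.Reachable u v) :
    H.Reachable u v := by
  obtain ⟨p⟩ := huv
  induction p with
  | nil => exact Reachable.refl _
  | cons ha _ ih => exact (h _ _ ha).trans ih

lemma walk_split {G : SimpleGraph V} {u v : V} (p : G.Walk u v)
    (hnd : p.edges.Nodup) {a b : V} (hf : s(a, b) ∈ p.edges) :
    ((G.deleteEdges {s(a, b)}).Reachable u a ∧ (G.deleteEdges {s(a, b)}).Reachable b v) ∨
    ((G.deleteEdges {s(a, b)}).Reachable u b ∧ (G.deleteEdges {s(a, b)}).Reachable a v) := by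
  induction p with
  | nil => simp at hf
  | @cons x m y hadj q ih =>
    rw [Walk.edges_cons, List.nodup_cons] at hnd
    rw [Walk.edges_cons, List.mem_cons] at hf
    rcases hf with hf | hf
    · have hq : (G.deleteEdges {s(a, b)}).Reachable m y := by
        refine ⟨q.transfer _ ?_⟩
        intro e he
        rw [edgeSet_deleteEdges]
        refine ⟨q.edges_subset_edgeSet he, ?_⟩
        simp only [Set.mem_singleton_iff]
        rintro rfl
        exact hnd.1 (hf ▸ he)
      rcases Sym2.eq_iff.mp hf with ⟨rfl, rfl⟩ | ⟨rfl, rfl⟩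
      · exact Or.inl ⟨Reachable.refl _, hq⟩
      · exact Or.inr ⟨Reachable.refl _, hq⟩
    · have hne : s(x, m) ≠ s(a, b) := fun hh => hnd.1 (hh ▸ hf)
      have hadj' : (G.deleteEdges {s(a, b)}).Adj x m := by
        rw [deleteEdges_adj]; exact ⟨hadj, by simpa using hne⟩
      rcases ih hnd.2 hf with ⟨h1, h2⟩ | ⟨h1, h2⟩
      · exact Or.inl ⟨hadj'.reachable.trans h1, h2⟩
      · exact Or.inr ⟨hadj'.reachable.trans h1, h2⟩

lemma reachable_delete_cases {G : SimpleGraph V} {x y u v : V}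
    (h : G.Reachable u v) :
    (G.deleteEdges {s(x, y)}).Reachable u v ∨
    ((G.deleteEdges {s(x, y)}).Reachable u x ∧ (G.deleteEdges {s(x, y)}).Reachable y v) ∨
    ((G.deleteEdges {s(x, y)}).Reachable u y ∧ (G.deleteEdges {s(x, y)}).Reachable x v) := by
  obtain ⟨p⟩ := h
  induction p with
  | nil => exact Or.inl (Reachable.refl _)
  | @cons a m c hadj q ih =>
    by_cases he : s(a, m) = s(x, y)
    · rcases Sym2.eq_iff.mp he with ⟨rfl, rfl⟩ | ⟨rfl, rfl⟩
      · rcases ih with h1 | ⟨h1, h2⟩ | ⟨h1, h2⟩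
        · exact Or.inr (Or.inl ⟨Reachable.refl _, h1⟩)
        · exact Or.inl (h1.symm.trans h2)
        · exact Or.inl h2
      · rcases ih with h1 | ⟨h1, h2⟩ | ⟨h1, h2⟩
        · exact Or.inr (Or.inr ⟨Reachable.refl _, h1⟩)
        · exact Or.inl h2
        · exact Or.inl (h1.symm.trans h2)
    · have hadj' : (G.deleteEdges {s(x, y)}).Adj a m := by
        rw [deleteEdges_adj]; exact ⟨hadj, by simpa using he⟩
      rcases ih with h1 | ⟨h1, h2⟩ | ⟨h1, h2⟩
      · exact Or.inl (hadj'.reachable.trans h1)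
      · exact Or.inr (Or.inl ⟨hadj'.reachable.trans h1, h2⟩)
      · exact Or.inr (Or.inr ⟨hadj'.reachable.trans h1, h2⟩)

lemma card_cc_congr {G H : SimpleGraph V} (h : ∀ u v : V, G.Reachable u v ↔ H.Reachable u v) :
    Nat.card G.ConnectedComponent = Nat.card H.ConnectedComponent :=
  Nat.card_congr (Quot.congrRight h)

lemma card_cc_bot : Nat.card (⊥ : SimpleGraph V).ConnectedComponent = Nat.card V := by
  refine (Nat.card_eq_of_bijective (⊥ : SimpleGraph V).connectedComponentMk ⟨?_, ?_⟩).symm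
  · intro a b hab
    exact reachable_bot.mp (ConnectedComponent.eq.mp hab)
  · exact fun c => c.exists_rep



lemma card_cc_deleteEdge [Finite V] {G : SimpleGraph V} {x y : V} (hadj : G.Adj x y)
    (hnr : ¬(G.deleteEdges {s(x, y)}).Reachable x y) :
    Nat.card (G.deleteEdges {s(x, y)}).ConnectedComponent
      = Nat.card G.ConnectedComponent + 1 := by
  classical
  set G' := G.deleteEdges {s(x, y)} with hG'
  have hle : G' ≤ G := deleteEdges_le _
  set φ : G'.ConnectedComponent → G.ConnectedComponent :=
    ConnectedComponent.map (Hom.ofLE hle) with hφ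
  have hφmk : ∀ v : V, φ (Quot.mk G'.Reachable v) = Quot.mk G.Reachable v := fun v => rfl
  have : Fintype V := Fintype.ofFinite V
  have : Fintype G.ConnectedComponent := Fintype.ofFinite _
  have : Fintype G'.ConnectedComponent := Fintype.ofFinite _
  have hcxdef : True := trivial
  have key : ∀ c : G.ConnectedComponent,
      Nat.card {d : G'.ConnectedComponent // φ d = c} = if c = (Quot.mk G.Reachable x) then 2 else 1 := by
    intro c
    obtain ⟨u, rfl⟩ := c.exists_rep
    by_cases hc : Quot.mk G.Reachable u = (Quot.mk G.Reachable x)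
    · erw [if_pos hc]
      rw [Nat.card_eq_two_iff]
      have hxy' : (Quot.mk G'.Reachable x : G'.ConnectedComponent) ≠ Quot.mk G'.Reachable y :=
        fun hh => hnr (ConnectedComponent.eq.mp hh)
      have hmkx : φ (Quot.mk G'.Reachable x) = Quot.mk G.Reachable u := by
        rw [hφmk]; exact hc.symm
      have hmky : φ (Quot.mk G'.Reachable y) = Quot.mk G.Reachable u := by
        rw [hφmk]
        exact (ConnectedComponent.eq.mpr hadj.symm.reachable).trans hc.symm
      refine ⟨⟨_, hmkx⟩, ⟨_, hmky⟩, fun hh => hxy' (congrArg Subtype.val hh), ?_⟩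
      rw [Set.eq_univ_iff_forall]
      rintro ⟨d, hd⟩
      obtain ⟨a, rfl⟩ := d.exists_rep
      rw [hφmk] at hd
      have har : G.Reachable a x := ConnectedComponent.eq.mp (hd.trans hc)
      simp only [Set.mem_insert_iff, Set.mem_singleton_iff, Subtype.mk.injEq]
      rcases reachable_delete_cases (x := x) (y := y) har with h1 | ⟨h1, h2⟩ | ⟨h1, h2⟩
      · exact Or.inl (Subtype.ext (ConnectedComponent.eq.mpr h1))
      · exact Or.inl (Subtype.ext (ConnectedComponent.eq.mpr h1))
      · exact Or.inr (Subtype.ext (ConnectedComponent.eq.mpr h1))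
    · erw [if_neg hc]
      rw [Nat.card_eq_one_iff_unique]
      constructor
      · constructor
        rintro ⟨d, hd⟩ ⟨d', hd'⟩
        have step : ∀ e : G'.ConnectedComponent, φ e = Quot.mk G.Reachable u →
            e = Quot.mk G'.Reachable u := by
          intro e he
          obtain ⟨a, rfl⟩ := e.exists_rep
          rw [hφmk] at he
          have har : G.Reachable a u := ConnectedComponent.eq.mp he
          rcases reachable_delete_cases (x := x) (y := y) har with h1 | ⟨h1, h2⟩ | ⟨h1, h2⟩
          · exact ConnectedComponent.eq.mpr h1
          · exact absurd (ConnectedComponent.eq.mpr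
              (((h2.mono hle).symm.trans hadj.symm.reachable))) hc
          · exact absurd (ConnectedComponent.eq.mpr ((h2.mono hle).symm)) hc
        rw [Subtype.mk.injEq, step d hd, step d' hd']
      · exact ⟨⟨Quot.mk G'.Reachable u, hφmk u⟩⟩
  have hsig := Nat.card_congr (Equiv.sigmaFiberEquiv φ).symm
  rw [Nat.card_eq_fintype_card, Nat.card_eq_fintype_card, Fintype.card_sigma] at hsig
  have hcard : ∀ c : G.ConnectedComponent,
      Fintype.card {d : G'.ConnectedComponent // φ d = c} = if c = (Quot.mk G.Reachable x) then 2 else 1 := by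
    intro c; rw [← Nat.card_eq_fintype_card]; exact key c
  rw [Nat.card_eq_fintype_card, Nat.card_eq_fintype_card, hsig,
    Finset.sum_congr rfl (fun c _ => hcard c)]
  have : ∀ c : G.ConnectedComponent,
      (if c = (Quot.mk G.Reachable x) then 2 else 1) = 1 + (if c = (Quot.mk G.Reachable x) then 1 else 0) := by
    intro c; split_ifs <;> rfl
  have hsum := Finset.sum_ite_eq' (Finset.univ : Finset G.ConnectedComponent)
      (Quot.mk G.Reachable x) (fun _ => (1 : ℕ))
  erw [if_pos (Finset.mem_univ _)] at hsum
  rw [Finset.sum_congr rfl (fun c _ => this c), Finset.sum_add_distrib, Finset.sum_const, hsum]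
  rw [smul_eq_mul, mul_one, Fintype.card]


lemma isAcyclic_anti {G H : SimpleGraph V} (hle : H ≤ G) (hG : G.IsAcyclic) : H.IsAcyclic := by
  intro v p hp
  exact hG _ (hp.transfer fun e he => edgeSet_mono hle (p.edges_subset_edgeSet he))

lemma card_cc_acyclic_aux [Finite V] : ∀ (n : ℕ) (F : SimpleGraph V), F.IsAcyclic →
    F.edgeSet.ncard = n → Nat.card F.ConnectedComponent + n = Nat.card V := by
  intro n
  induction n with
  | zero =>
    intro F _ hn
    have hFbot : F = ⊥ := edgeSet_eq_empty.mp ((Set.ncard_eq_zero (Set.toFinite _)).mp hn)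
    subst hFbot
    rw [card_cc_bot, add_zero]
  | succ n ih =>
    intro F hF hn
    have hne : F.edgeSet.Nonempty := by
      rw [Set.nonempty_iff_ne_empty]
      intro h0
      rw [h0] at hn
      simp at hn
    obtain ⟨e, he⟩ := hne
    revert he
    refine Sym2.ind (fun x y => ?_) e
    intro he
    have hadj : F.Adj x y := he
    have hF' : (F.deleteEdges {s(x, y)}).IsAcyclic := isAcyclic_anti (deleteEdges_le _) hF
    have hnr : ¬(F.deleteEdges {s(x, y)}).Reachable x y := by
      intro hr
      obtain ⟨u, p, hp, _⟩ := adj_and_reachable_delete_edges_iff_exists_cycle.mp ⟨hadj, hr⟩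
      exact hF _ hp
    have hcard : (F.deleteEdges {s(x, y)}).edgeSet.ncard = n := by
      rw [edgeSet_deleteEdges, Set.ncard_diff_singleton_of_mem he, hn]
      omega
    have h1 := ih (F.deleteEdges {s(x, y)}) hF' hcard
    have h2 := card_cc_deleteEdge hadj hnr
    omega

lemma card_cc_acyclic [Finite V] {F : SimpleGraph V} (hF : F.IsAcyclic) :
    Nat.card F.ConnectedComponent + F.edgeSet.ncard = Nat.card V :=
  card_cc_acyclic_aux _ F hF rfl

lemma mem_edgeSet_thresholdOf {q : ℕ} {H : SimpleGraph (Fin q)} {w : Sym2 (Fin q) → ℝ}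
    {ε : ℝ} {g : Sym2 (Fin q)} :
    g ∈ (thresholdOf H w ε).edgeSet ↔ g ∈ H.edgeSet ∧ ε < w g := by
  induction g using Sym2.ind with
  | _ i j => rfl

lemma mst_reachable {q : ℕ} {w : Sym2 (Fin q) → ℝ} {T : SimpleGraph (Fin q)}
    (hT : IsMaxSpanningTree ⊤ w T) {ε : ℝ} {x y : Fin q} (hxy : x ≠ y)
    (hw : ε < w s(x, y)) : (thresholdOf T w ε).Reachable x y := by
  classical
  by_contra hcon
  by_cases hadjT : T.Adj x y
  · exact hcon (SimpleGraph.Adj.reachable (⟨hadjT, hw⟩ : (thresholdOf T w ε).Adj x y))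
  have hconn : T.Connected := hT.2.1.isConnected
  obtain ⟨p0⟩ := hconn.preconnected x y
  set p : T.Path x y := p0.toPath with hp
  have hbad : ∃ f ∈ (p : T.Walk x y).edges, ¬ ε < w f := by
    by_contra hall
    push_neg at hall
    refine hcon ⟨(p : T.Walk x y).transfer (thresholdOf T w ε) ?_⟩
    intro g hg
    exact mem_edgeSet_thresholdOf.mpr ⟨(p : T.Walk x y).edges_subset_edgeSet hg, hall g hg⟩
  obtain ⟨f, hfp, hfw⟩ := hbad
  revert hfp hfw
  refine Sym2.ind (fun a b => ?_) f
  intro hfp hfw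
  push_neg at hfw
  have hfT : s(a, b) ∈ T.edgeSet := (p : T.Walk x y).edges_subset_edgeSet hfp
  have heT : s(x, y) ∉ T.edgeSet := fun hh => hadjT hh
  have hne : s(x, y) ≠ s(a, b) := by
    intro hh
    rw [hh] at hw
    linarith
  set T' : SimpleGraph (Fin q) := (T ⊔ fromEdgeSet {s(x, y)}).deleteEdges {s(a, b)} with hT'
  have hE : T'.edgeSet = (T.edgeSet ∪ {s(x, y)}) \ {s(a, b)} := by
    rw [hT', edgeSet_deleteEdges, edgeSet_sup, edgeSet_fromEdgeSet]
    congr 2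
    ext g
    simp only [Set.mem_diff, Set.mem_singleton_iff, Set.mem_setOf_eq, and_iff_left_iff_imp]
    rintro rfl
    simp [Sym2.mk_isDiag_iff, hxy]
  have hTd_le : T.deleteEdges {s(a, b)} ≤ T' := by
    intro u v huv
    rw [deleteEdges_adj] at huv ⊢
    exact ⟨Or.inl huv.1, huv.2⟩
  have hexy : T'.Adj x y := by
    rw [hT', deleteEdges_adj, sup_adj, fromEdgeSet_adj]
    exact ⟨Or.inr ⟨rfl, hxy⟩, by simpa using hne⟩
  have hreach_ab : T'.Reachable a b := by
    rcases walk_split (p : T.Walk x y) p.2.edges_nodup hfp with ⟨h1, h2⟩ | ⟨h1, h2⟩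
    · exact ((h1.mono hTd_le).symm.trans hexy.reachable).trans (h2.mono hTd_le).symm
    · exact (((h1.mono hTd_le).symm.trans hexy.reachable).trans (h2.mono hTd_le).symm).symm
  have hadjcase : ∀ u v : Fin q, T.Adj u v → T'.Reachable u v := by
    intro u v huv
    by_cases hcase : s(u, v) = s(a, b)
    · rcases Sym2.eq_iff.mp hcase with ⟨rfl, rfl⟩ | ⟨rfl, rfl⟩
      · exact hreach_ab
      · exact hreach_ab.symm
    · refine SimpleGraph.Adj.reachable ?_
      rw [hT', deleteEdges_adj, sup_adj]
      exact ⟨Or.inl huv, by simpa using hcase⟩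
  have hconn' : T'.Connected := by
    rw [connected_iff]
    exact ⟨fun u v => reachable_of_forall_adj hadjcase (hconn.preconnected u v),
      hconn.nonempty⟩
  have hacyc : T'.IsAcyclic := by
    intro v c hc
    by_cases hec : s(x, y) ∈ c.edges
    · have h2 := adj_and_reachable_delete_edges_iff_exists_cycle.mpr ⟨v, c, hc, hec⟩
      have hle2 : T'.deleteEdges {s(x, y)} ≤ T.deleteEdges {s(a, b)} := by
        intro u v' huv
        rw [deleteEdges_adj] at huv ⊢
        obtain ⟨huv1, huv2⟩ := huv
        rw [hT', deleteEdges_adj, sup_adj, fromEdgeSet_adj] at huv1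
        rcases huv1.1 with h | h
        · exact ⟨h, huv1.2⟩
        · exact absurd h.1 (by simpa using huv2)
      have hr : (T.deleteEdges {s(a, b)}).Reachable x y := Reachable.mono hle2 h2.2
      obtain ⟨p2⟩ := hr
      have hp3sub : ∀ g ∈ p2.edges, g ∈ T.edgeSet := by
        intro g hg
        have := p2.edges_subset_edgeSet hg
        rw [edgeSet_deleteEdges] at this
        exact this.1
      set p3 : T.Walk x y := p2.transfer T hp3sub with hp3
      have hfnot : s(a, b) ∉ p3.toPath.1.edges := by
        intro hmem
        have h1 := Walk.edges_toPath_subset p3 hmem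
        rw [Walk.edges_transfer] at h1
        have := p2.edges_subset_edgeSet h1
        rw [edgeSet_deleteEdges] at this
        exact this.2 rfl
      have hpeq : p3.toPath = p := hT.2.1.IsAcyclic.path_unique p3.toPath p
      rw [hpeq] at hfnot
      exact hfnot hfp
    · refine hT.2.1.IsAcyclic _ (hc.transfer ?_)
      intro g hg
      have hgT' : g ∈ T'.edgeSet := c.edges_subset_edgeSet hg
      rw [hE] at hgT'
      rcases hgT'.1 with h | h
      · exact h
      · exact absurd (Set.mem_singleton_iff.mp h ▸ hg) (h ▸ hec)
  -- weight contradiction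
  have hiso := hT.2.2 T' le_top ⟨hconn', hacyc⟩
  have hfinT : T.edgeSet.Finite := Set.toFinite _
  have hfinT' : T'.edgeSet.Finite := Set.toFinite _
  have hsumT : (∑ᶠ g ∈ T.edgeSet, w g) = ∑ g ∈ hfinT.toFinset, w g :=
    finsum_mem_eq_finite_toFinset_sum _ hfinT
  have hfs : hfinT'.toFinset = (insert s(x, y) hfinT.toFinset).erase s(a, b) := by
    ext g
    simp only [Set.Finite.mem_toFinset, Finset.mem_erase, Finset.mem_insert, hE,
      Set.mem_diff, Set.mem_union, Set.mem_singleton_iff]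
    tauto
  have hsumT'0 : (∑ᶠ g ∈ T'.edgeSet, w g) = ∑ g ∈ (insert s(x, y) hfinT.toFinset).erase s(a, b), w g := by
    rw [finsum_mem_eq_finite_toFinset_sum _ hfinT', hfs]
  have h1 := Finset.sum_erase_add (insert s(x, y) hfinT.toFinset) w
    (show s(a, b) ∈ insert s(x, y) hfinT.toFinset by rw [Finset.mem_insert, hfinT.mem_toFinset]; exact Or.inr hfT)
  have h2 := Finset.sum_insert (show s(x, y) ∉ hfinT.toFinset by rw [hfinT.mem_toFinset]; exact heT) (f := w)
  rw [hsumT'0, hsumT] at hiso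
  linarith
lemma mem_edgeSet_thresholdGraph {q : ℕ} {w : Sym2 (Fin q) → ℝ} {ε : ℝ}
    {g : Sym2 (Fin q)} :
    g ∈ (thresholdGraph w ε).edgeSet ↔ ¬g.IsDiag ∧ ε < w g := by
  rw [thresholdGraph, mem_edgeSet_thresholdOf, edgeSet_top, Set.mem_compl_iff, Sym2.mem_diagSet]

lemma betti1_eq {q : ℕ} {w : Sym2 (Fin q) → ℝ} {T : SimpleGraph (Fin q)}
    (hT : IsMaxSpanningTree ⊤ w T) (ε : ℝ) :
    betti1 w ε = ({e : Sym2 (Fin q) | ¬e.IsDiag ∧ e ∉ T.edgeSet ∧ ε < w e}).ncard := by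
  classical
  set Gε := thresholdGraph w ε with hGε
  set Tε := thresholdOf T w ε with hTε
  have hTle : Tε ≤ Gε := by
    intro u v h
    exact ⟨(h.1.ne : u ≠ v), h.2⟩
  have hreach_iff : ∀ u v : Fin q, Gε.Reachable u v ↔ Tε.Reachable u v := by
    intro u v
    constructor
    · refine reachable_of_forall_adj ?_
      intro a b hab
      exact mst_reachable hT hab.1.ne hab.2
    · exact fun h => h.mono hTle
  have hb0 : betti0 w ε = Nat.card Tε.ConnectedComponent := card_cc_congr hreach_iff
  have hTεle : Tε ≤ T := fun u v h => h.1
  have hacyc : Tε.IsAcyclic := isAcyclic_anti hTεle hT.2.1.IsAcyclic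
  have hcc := card_cc_acyclic hacyc
  simp only [Nat.card_eq_fintype_card, Fintype.card_fin] at hcc
  have hsplit : Gε.edgeSet
      = Tε.edgeSet ∪ {e : Sym2 (Fin q) | ¬e.IsDiag ∧ e ∉ T.edgeSet ∧ ε < w e} := by
    ext g
    rw [Set.mem_union, Set.mem_setOf_eq, hGε, mem_edgeSet_thresholdGraph, hTε,
      mem_edgeSet_thresholdOf]
    have := T.not_isDiag_of_mem_edgeSet (e := g)
    tauto
  have hdisj : Disjoint Tε.edgeSet
      {e : Sym2 (Fin q) | ¬e.IsDiag ∧ e ∉ T.edgeSet ∧ ε < w e} := by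
    rw [Set.disjoint_left]
    intro g hg hg2
    rw [hTε, mem_edgeSet_thresholdOf] at hg
    exact hg2.2.1 hg.1
  have hE : numEdges w ε = Tε.edgeSet.ncard
      + ({e : Sym2 (Fin q) | ¬e.IsDiag ∧ e ∉ T.edgeSet ∧ ε < w e}).ncard := by
    rw [numEdges, ← hGε, hsplit, Set.ncard_union_eq hdisj (Set.toFinite _) (Set.toFinite _)]
  rw [Nat.card_eq_fintype_card] at hb0
  rw [betti1, hE, hb0]
  push_cast
  omega

lemma jump_iff {q : ℕ} {w : Sym2 (Fin q) → ℝ} {T : SimpleGraph (Fin q)}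
    (hT : IsMaxSpanningTree ⊤ w T) (ε : ℝ) :
    IsJump (betti1 w) ε ↔ ε ∈ w '' {e : Sym2 (Fin q) | ¬e.IsDiag ∧ e ∉ T.edgeSet} := by
  classical
  set S : Set (Sym2 (Fin q)) := {e : Sym2 (Fin q) | ¬e.IsDiag ∧ e ∉ T.edgeSet} with hS
  have hform : ∀ x : ℝ, betti1 w x = ({e ∈ S | x < w e}).ncard := by
    intro x
    have hseteq : ({e ∈ S | x < w e} : Set (Sym2 (Fin q)))
        = {e : Sym2 (Fin q) | ¬e.IsDiag ∧ e ∉ T.edgeSet ∧ x < w e} := by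
      ext g
      simp only [hS, Set.mem_setOf_eq]
      tauto
    rw [betti1_eq hT x, ← hseteq]
  constructor
  · intro hj
    by_contra hnot
    have hfin : (w '' S).Finite := (Set.toFinite S).image w
    obtain ⟨δ, hδpos, hδ⟩ : ∃ δ > 0, ∀ p ∈ w '' S, δ ≤ |p - ε| := by
      rcases hfin.toFinset.eq_empty_or_nonempty with hcase | hcase
      · exact ⟨1, one_pos, fun p hp => absurd ((hfin.mem_toFinset).mpr hp)
          (by rw [hcase]; exact Finset.notMem_empty p)⟩
      · refine ⟨(hfin.toFinset.image (fun p => |p - ε|)).min' (hcase.image _), ?_, ?_⟩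
        · obtain ⟨p0, hp0, hmin⟩ := Finset.mem_image.mp
            ((hfin.toFinset.image (fun p => |p - ε|)).min'_mem (hcase.image _))
          rw [← hmin]
          show 0 < |p0 - ε|
          rw [abs_pos, sub_ne_zero]
          intro hcon
          exact hnot (hcon ▸ hfin.mem_toFinset.mp hp0)
        · intro p hp
          exact Finset.min'_le _ _ (Finset.mem_image_of_mem _ (hfin.mem_toFinset.mpr hp))
    obtain ⟨x, hx, hne⟩ := hj δ hδpos
    apply hne
    have hNa : {e ∈ S | x < w e} = {e ∈ S | ε < w e} := by
      ext g
      simp only [Set.mem_setOf_eq, and_congr_right_iff]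
      intro hgS
      have hgP : w g ∈ w '' S := Set.mem_image_of_mem w hgS
      have h1 : δ ≤ |w g - ε| := hδ _ hgP
      rw [abs_sub_lt_iff] at hx
      rcases le_or_gt (w g) ε with hle | hlt
      · have hne' : w g ≠ ε := fun hcon => hnot (hcon ▸ hgP)
        have h2 : δ ≤ ε - w g := by
          rcases abs_cases (w g - ε) with ⟨ha, _⟩ | ⟨ha, _⟩
          · exfalso
            rcases lt_or_eq_of_le hle with h | h
            · linarith
            · exact hne' h
          · linarith
        constructor <;> intro <;> linarith
      · have h2 : δ ≤ w g - ε := by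
          rcases abs_cases (w g - ε) with ⟨ha, _⟩ | ⟨ha, _⟩ <;> linarith
        constructor <;> intro <;> linarith
    rw [hform x, hform ε, hNa]
  · rintro ⟨e, heS, hwe⟩
    intro δ hδpos
    refine ⟨ε - δ / 2, by rw [abs_sub_lt_iff]; constructor <;> linarith, ?_⟩
    rw [hform, hform]
    have hssub : {g ∈ S | ε < w g} ⊂ {g ∈ S | ε - δ / 2 < w g} := by
      constructor
      · intro g hg
        exact ⟨hg.1, by linarith [hg.2]⟩
      · intro hsub
        have : e ∈ {g ∈ S | ε - δ / 2 < w g} := ⟨heS, by rw [hwe]; linarith⟩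
        have he2 := hsub this
        rw [Set.mem_setOf_eq] at he2
        rw [hwe] at he2
        exact lt_irrefl ε he2.2
    have := Set.ncard_lt_ncard hssub (Set.toFinite _)
    intro hcon
    rw [Nat.cast_inj] at hcon
    omega

end AuxProofs

/-- **Death values are the non-tree edge weights.** For the complete graph on
`q ≥ 2` vertices with pairwise distinct positive edge weights and maximum spanning
tree `T`, an edge weight `w s(i,j)` is a jump point of the Betti-1 curve iff the
edge `{i,j}` does not lie in `T`; consequently the death set has exactly
`(q−1)(q−2)/2` elements. -/
theorem death_set_eq_non_mst (q : ℕ) (hq : 2 ≤ q) (w : Sym2 (Fin q) → ℝ)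
    (hpos : ∀ e : Sym2 (Fin q), ¬ e.IsDiag → 0 < w e)
    (hinj : ∀ e f : Sym2 (Fin q), ¬ e.IsDiag → ¬ f.IsDiag → w e = w f → e = f)
    (T : SimpleGraph (Fin q)) (hT : IsMaxSpanningTree ⊤ w T) :
    (∀ i j : Fin q, i ≠ j →
      (IsJump (betti1 w) (w s(i, j)) ↔ s(i, j) ∉ T.edgeSet)) ∧
    {ε : ℝ | IsJump (betti1 w) ε}.ncard = (q - 1) * (q - 2) / 2 := by
  classical
  set S : Set (Sym2 (Fin q)) := {e : Sym2 (Fin q) | ¬e.IsDiag ∧ e ∉ T.edgeSet} with hS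
  constructor
  · intro i j hij
    rw [jump_iff hT]
    constructor
    · rintro ⟨e, heS, hwe⟩
      have hediag : ¬e.IsDiag := heS.1
      have hijdiag : ¬(s(i, j) : Sym2 (Fin q)).IsDiag := by
        rw [Sym2.mk_isDiag_iff]; exact hij
      rw [hinj e s(i, j) hediag hijdiag hwe] at heS
      exact heS.2
    · intro hnot
      exact Set.mem_image_of_mem w ⟨by rw [Sym2.mk_isDiag_iff]; exact hij, hnot⟩
  · have hset : {ε : ℝ | IsJump (betti1 w) ε} = w '' S := by
      ext ε
      rw [Set.mem_setOf_eq, jump_iff hT]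
    rw [hset, Set.ncard_image_of_injOn (fun a ha b hb hab => hinj a b ha.1 hb.1 hab)]
    -- S = ⊤.edgeSet \ T.edgeSet
    have hSeq : S = (⊤ : SimpleGraph (Fin q)).edgeSet \ T.edgeSet := by
      rw [hS, edgeSet_top]
      ext g
      simp only [Set.mem_setOf_eq, Set.mem_diff, Set.mem_compl_iff, Sym2.mem_diagSet]
    have htop : (⊤ : SimpleGraph (Fin q)).edgeSet.ncard = q.choose 2 := by
      rw [← coe_edgeFinset, Set.ncard_coe_finset, card_edgeFinset_top_eq_card_choose_two,
        Fintype.card_fin]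
    have hTcard : T.edgeSet.ncard = q - 1 := by
      have hfin : Fintype T.edgeSet := Fintype.ofFinite _
      have := hT.2.1.card_edgeFinset
      rw [Fintype.card_fin] at this
      rw [← coe_edgeFinset, Set.ncard_coe_finset]
      omega
    rw [hSeq, Set.ncard_diff (edgeSet_mono le_top) (Set.toFinite _), htop, hTcard]
    obtain ⟨k, rfl⟩ : ∃ k, q = k + 2 := ⟨q - 2, by omega⟩
    obtain ⟨m, hm⟩ := Nat.even_mul_succ_self k
    rw [Nat.choose_two_right]
    have h1 : k + 2 - 1 = k + 1 := rfl
    have h2 : k + 2 - 2 = k := rfl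
    rw [h1, h2]
    have e1 : (k + 2) * (k + 1) = k * (k + 1) + 2 * (k + 1) := by ring
    have e2 : (k + 1) * k = k * (k + 1) := by ring
    omega
end

section
/- Let G be the complete graph on q ≥ 2 vertices with pairwise distinct positive edge weights and let T be its (unique) maximum spanning tree. For every ε ≥ 0, the number of connected components of the threshold graph G_ε satisfies β₀(ε) = 1 + #{edges of T with weight ≤ ε}. -/
namespace Betti0Aux

open SimpleGraph

variable {V : Type*}

variable {V : Type*}

/-- Splitting reachability along a deleted edge. -/
lemma reach_aux {G : SimpleGraph V} {a b u v : V} (p : G.Walk u v) :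
    (G \ fromEdgeSet {s(a,b)}).Reachable u v ∨
      ((G \ fromEdgeSet {s(a,b)}).Reachable u a ∧ (G \ fromEdgeSet {s(a,b)}).Reachable b v) ∨
      ((G \ fromEdgeSet {s(a,b)}).Reachable u b ∧ (G \ fromEdgeSet {s(a,b)}).Reachable a v) := by
  induction p with
  | nil => exact Or.inl (Reachable.refl _)
  | @cons x y z h p ih =>
    by_cases he : s(x, y) = s(a, b)
    · rw [Sym2.eq_iff] at he
      rcases he with ⟨rfl, rfl⟩ | ⟨rfl, rfl⟩
      · rcases ih with h1 | ⟨h1, h2⟩ | ⟨h1, h2⟩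
        · exact Or.inr (Or.inl ⟨Reachable.refl _, h1⟩)
        · exact Or.inl (h1.symm.trans h2)
        · exact Or.inl h2
      · rcases ih with h1 | ⟨h1, h2⟩ | ⟨h1, h2⟩
        · exact Or.inr (Or.inr ⟨Reachable.refl _, h1⟩)
        · exact Or.inl h2
        · exact Or.inl (h1.symm.trans h2)
    · have hadj : (G \ fromEdgeSet {s(a,b)}).Adj x y := by
        rw [sdiff_adj, fromEdgeSet_adj]
        exact ⟨h, fun hc => he hc.1⟩
      rcases ih with h1 | ⟨h1, h2⟩ | ⟨h1, h2⟩
      · exact Or.inl (hadj.reachable.trans h1)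
      · exact Or.inr (Or.inl ⟨hadj.reachable.trans h1, h2⟩)
      · exact Or.inr (Or.inr ⟨hadj.reachable.trans h1, h2⟩)

/-- If two graphs have the same reachability relation, they have the same number
of connected components. -/
lemma card_cc_eq {G H : SimpleGraph V} (hle : H ≤ G)
    (hr : ∀ u v : V, G.Reachable u v → H.Reachable u v) :
    Nat.card H.ConnectedComponent = Nat.card G.ConnectedComponent := by
  apply Nat.card_eq_of_bijective (ConnectedComponent.map (Hom.ofLE hle))
  constructor
  · refine ConnectedComponent.ind₂ (fun u v h => ?_)
    simp only [ConnectedComponent.map_mk, Hom.ofLE_apply] at h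
    exact ConnectedComponent.sound (hr u v (ConnectedComponent.exact h))
  · refine ConnectedComponent.ind (fun v => ⟨H.connectedComponentMk v, ?_⟩)
    simp [ConnectedComponent.map_mk, Hom.ofLE_apply]

/-- Deleting a bridge increases the number of connected components by one. -/
lemma card_cc_sdiff_bridge [Finite V] {G : SimpleGraph V} {a b : V}
    (hab : G.Adj a b) (hnr : ¬(G \ fromEdgeSet {s(a,b)}).Reachable a b) :
    Nat.card (G \ fromEdgeSet {s(a,b)}).ConnectedComponent
      = Nat.card G.ConnectedComponent + 1 := by
  classical
  set G' := G \ fromEdgeSet {s(a,b)} with hG'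
  have hle : G' ≤ G := sdiff_le
  set φ : G'.ConnectedComponent → G.ConnectedComponent :=
    ConnectedComponent.map (Hom.ofLE hle) with hφ
  have hφmk : ∀ v : V, φ (G'.connectedComponentMk v) = G.connectedComponentMk v := by
    intro v
    simp [hφ, ConnectedComponent.map_mk, Hom.ofLE_apply]
  set ca := G'.connectedComponentMk a with hca
  set cb := G'.connectedComponentMk b with hcb
  have hne : ca ≠ cb := fun h => hnr (ConnectedComponent.exact h)
  have key : ∀ c d : G'.ConnectedComponent, φ c = φ d →
      c = d ∨ (c = ca ∧ d = cb) ∨ (c = cb ∧ d = ca) := by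
    refine ConnectedComponent.ind₂ (fun u v h => ?_)
    rw [hφmk, hφmk] at h
    obtain ⟨p⟩ := ConnectedComponent.exact h
    rcases reach_aux (a := a) (b := b) p with h1 | ⟨h1, h2⟩ | ⟨h1, h2⟩
    · exact Or.inl (ConnectedComponent.sound h1)
    · exact Or.inr (Or.inl ⟨ConnectedComponent.sound h1, (ConnectedComponent.sound h2).symm⟩)
    · exact Or.inr (Or.inr ⟨ConnectedComponent.sound h1, (ConnectedComponent.sound h2).symm⟩)
  letI : Fintype G'.ConnectedComponent := Fintype.ofFinite _
  letI : Fintype G.ConnectedComponent := Fintype.ofFinite _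
  rw [Nat.card_eq_fintype_card, Nat.card_eq_fintype_card]
  have hbij : Function.Bijective
      (fun c : {c : G'.ConnectedComponent // ¬ c = cb} => φ c.1) := by
    constructor
    · rintro ⟨c, hc⟩ ⟨d, hd⟩ h
      rcases key c d h with h1 | ⟨h1, h2⟩ | ⟨h1, h2⟩
      · exact Subtype.ext h1
      · exact absurd h2 hd
      · exact absurd h1 hc
    · refine ConnectedComponent.ind (fun v => ?_)
      by_cases hv : G'.connectedComponentMk v = cb
      · refine ⟨⟨ca, hne⟩, ?_⟩
        have h1 : G.connectedComponentMk a = G.connectedComponentMk b :=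
          ConnectedComponent.sound hab.reachable
        have h2 : G'.Reachable v b := ConnectedComponent.exact hv
        show φ ca = G.connectedComponentMk v
        rw [hca, hφmk, h1]
        exact (ConnectedComponent.sound (h2.mono hle)).symm
      · exact ⟨⟨G'.connectedComponentMk v, hv⟩, hφmk v⟩
  have hcardeq := Fintype.card_of_bijective hbij
  have h1 : Fintype.card {c : G'.ConnectedComponent // ¬ c = cb}
      = Fintype.card G'.ConnectedComponent - 1 := by
    rw [Fintype.card_subtype_compl, Fintype.card_subtype_eq]
  have h2 : 1 ≤ Fintype.card G'.ConnectedComponent := by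
    have : Nonempty G'.ConnectedComponent := ⟨cb⟩
    exact Fintype.card_pos
  omega

/-- A forest on a finite vertex set has `|V| - #edges` connected components. -/
lemma card_cc_acyclic {V : Type*} [Fintype V] :
    ∀ (n : ℕ) (G : SimpleGraph V), G.IsAcyclic → G.edgeSet.ncard = n →
      Nat.card G.ConnectedComponent + n = Fintype.card V := by
  intro n
  induction n with
  | zero =>
    intro G _ hn
    have hbot : G = ⊥ := by rwa [Set.ncard_eq_zero (Set.toFinite _), edgeSet_eq_empty] at hn
    subst hbot
    rw [Nat.add_zero, ← Nat.card_eq_fintype_card]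
    refine (Nat.card_eq_of_bijective (⊥ : SimpleGraph V).connectedComponentMk ⟨?_, ?_⟩).symm
    · intro u v h
      exact reachable_bot.mp (ConnectedComponent.exact h)
    · exact ConnectedComponent.ind (fun v => ⟨v, rfl⟩)
  | succ n ih =>
    intro G hG hn
    have hne : G.edgeSet.Nonempty := by
      rw [Set.nonempty_iff_ne_empty]
      intro h
      rw [h] at hn
      simp at hn
    obtain ⟨e, he⟩ := hne
    induction e using Sym2.ind with
    | _ a b =>
      have hadj : G.Adj a b := he
      have hbridge := isAcyclic_iff_forall_edge_isBridge.mp hG he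
      have hnr : ¬(G \ fromEdgeSet {s(a,b)}).Reachable a b := isBridge_iff.mp hbridge
      have hle : G \ fromEdgeSet {s(a,b)} ≤ G := sdiff_le
      have hG'acy : (G \ fromEdgeSet {s(a,b)}).IsAcyclic :=
        fun v c hc => hG (c.mapLe hle) (hc.mapLe hle)
      have hE : (G \ fromEdgeSet {s(a,b)}).edgeSet = G.edgeSet \ {s(a,b)} := by
        rw [edgeSet_sdiff, edgeSet_fromEdgeSet, edgeSet_sdiff_sdiff_isDiag]
      have hcard : (G \ fromEdgeSet {s(a,b)}).edgeSet.ncard = n := by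
        rw [hE, Set.ncard_diff_singleton_of_mem he, hn]
        omega
      have hih := ih _ hG'acy hcard
      have hb := card_cc_sdiff_bridge hadj hnr
      omega


/-- Exchange: replacing an edge on the `i`-`j` path of a tree by the edge `s(i,j)`
yields a tree. -/
lemma exchange_tree {T : SimpleGraph V} (htree : T.IsTree)
    {i j c d : V} (hij : i ≠ j) (hnadj : ¬T.Adj i j)
    (p : T.Walk i j) (hp : p.IsPath) (hf : s(c,d) ∈ p.edges) :
    ((T \ fromEdgeSet {s(c,d)}) ⊔ fromEdgeSet {s(i,j)}).IsTree := by
  classical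
  have hcd : T.Adj c d := p.adj_of_mem_edges hf
  set Tf := T \ fromEdgeSet {s(c,d)} with hTf
  have hTfle : Tf ≤ T := sdiff_le
  have hTfE : Tf.edgeSet = T.edgeSet \ {s(c,d)} := by
    rw [hTf, edgeSet_sdiff, edgeSet_fromEdgeSet, edgeSet_sdiff_sdiff_isDiag]
  have hbr : ¬Tf.Reachable c d := by
    have hb := isAcyclic_iff_forall_adj_isBridge.mp htree.2 hcd
    exact isBridge_iff.mp hb
  have dich : ∀ u, Tf.Reachable u c ∨ Tf.Reachable u d := by
    intro u
    obtain ⟨qq⟩ := htree.1.preconnected u c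
    rcases reach_aux (a := c) (b := d) qq with h | ⟨h1, h2⟩ | ⟨h1, h2⟩
    · exact Or.inl h
    · exact Or.inl h1
    · exact Or.inr h1
  have hnotij : ¬Tf.Reachable i j := by
    rintro ⟨q0⟩
    have hsub : ∀ e ∈ q0.edges, e ∈ T.edgeSet :=
      fun e he => edgeSet_mono hTfle (q0.edges_subset_edgeSet he)
    set q1 : T.Walk i j := q0.transfer T hsub with hq1
    have hq1e : q1.edges = q0.edges := Walk.edges_transfer q0 hsub
    have huniq := htree.2.path_unique q1.toPath ⟨p, hp⟩
    have hfq1 : s(c,d) ∈ (q1.toPath : T.Walk i j).edges := by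
      rw [huniq]; exact hf
    have hfq0 : s(c,d) ∈ q0.edges := by
      rw [← hq1e]
      exact Walk.edges_toPath_subset q1 hfq1
    have := q0.edges_subset_edgeSet hfq0
    rw [hTfE] at this
    exact this.2 rfl
  set T' := Tf ⊔ fromEdgeSet {s(i,j)} with hT'
  have hTfleT' : Tf ≤ T' := le_sup_left
  have hadjT' : T'.Adj i j :=
    (sup_adj Tf (fromEdgeSet {s(i,j)}) i j).mpr (Or.inr ((fromEdgeSet_adj _).mpr ⟨rfl, hij⟩))
  have hcdT' : T'.Reachable c d := by
    rcases dich i with hi | hi <;> rcases dich j with hj | hj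
    · exact absurd (hi.trans hj.symm) hnotij
    · exact ((hi.mono hTfleT').symm.trans hadjT'.reachable).trans (hj.mono hTfleT')
    · exact (((hi.mono hTfleT').symm.trans hadjT'.reachable).trans (hj.mono hTfleT')).symm
    · exact absurd (hi.trans hj.symm) hnotij
  have hconn : T'.Connected := by
    have key : ∀ x, T'.Reachable x c := by
      intro x
      rcases dich x with h | h
      · exact h.mono hTfleT'
      · exact (h.mono hTfleT').trans hcdT'.symm
    have : Nonempty V := ⟨i⟩
    exact ⟨fun u v => (key u).trans (key v).symm⟩
  have hacy : T'.IsAcyclic := by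
    intro v O hO
    by_cases he : s(i,j) ∈ O.edges
    · have hreach : (T' \ fromEdgeSet {s(i,j)}).Reachable i j :=
        (adj_and_reachable_delete_edges_iff_exists_cycle.mpr ⟨v, O, hO, he⟩).2
      have hle2 : T' \ fromEdgeSet {s(i,j)} ≤ Tf := by
        intro x y hxy
        rw [sdiff_adj, hT', sup_adj] at hxy
        rcases hxy with ⟨h1 | h1, h2⟩
        · exact h1
        · exact absurd h1 h2
      exact hnotij (hreach.mono hle2)
    · have hsub : ∀ e ∈ O.edges, e ∈ T.edgeSet := by
        intro e heO
        have hmem := O.edges_subset_edgeSet heO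
        rw [hT', edgeSet_sup] at hmem
        rcases hmem with h | h
        · exact edgeSet_mono hTfle h
        · rw [edgeSet_fromEdgeSet] at h
          exact absurd (h.1 ▸ heO) he
      exact htree.2 (O.transfer T hsub) (hO.transfer hsub)
  exact ⟨hconn, hacy⟩

/-- Path property of maximum spanning trees: every edge on the tree path
from `i` to `j` weighs at least `w s(i,j)`. -/
lemma mst_path_edge_weight {q : ℕ} (w : Sym2 (Fin q) → ℝ) (T : SimpleGraph (Fin q))
    (htree : T.IsTree)
    (hmax : ∀ T' : SimpleGraph (Fin q), T' ≤ ⊤ → T'.IsTree →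
      (∑ᶠ e ∈ T'.edgeSet, w e) ≤ ∑ᶠ e ∈ T.edgeSet, w e) {i j : Fin q} (hij : i ≠ j)
    (p : T.Walk i j) (hp : p.IsPath) {c d : Fin q} (hf : s(c,d) ∈ p.edges) :
    w s(i, j) ≤ w s(c, d) := by
  classical
  by_contra hlt
  push_neg at hlt
  by_cases hadj : T.Adj i j
  · have huniq := htree.2.path_unique ⟨p, hp⟩ (Path.singleton hadj)
    have hpe : p = Walk.cons hadj Walk.nil := by
      simpa [Path.singleton] using congrArg Subtype.val huniq
    rw [hpe] at hf
    simp only [Walk.edges_cons, Walk.edges_nil, List.mem_singleton] at hf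
    rw [hf] at hlt
    exact lt_irrefl _ hlt
  · have htree' := exchange_tree htree hij hadj p hp hf
    set Tf := T \ fromEdgeSet {s(c,d)} with hTfdef
    set T' := Tf ⊔ fromEdgeSet {s(i,j)} with hT'def
    have hfT : s(c,d) ∈ T.edgeSet := p.edges_subset_edgeSet hf
    have heT : s(i,j) ∉ T.edgeSet := fun h => hadj h
    have hfin : T.edgeSet.Finite := Set.toFinite _
    have hT'E : T'.edgeSet = insert s(i,j) (T.edgeSet \ {s(c,d)}) := by
      rw [hT'def, edgeSet_sup, hTfdef, edgeSet_sdiff, edgeSet_fromEdgeSet,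
        edgeSet_sdiff_sdiff_isDiag, edgeSet_fromEdgeSet]
      have hsingle : ({s(i,j)} : Set (Sym2 (Fin q))) \ {e | e.IsDiag} = {s(i,j)} := by
        ext e
        simp only [Set.mem_diff, Set.mem_singleton_iff, Set.mem_setOf_eq, and_iff_left_iff_imp]
        rintro rfl
        simp [hij]
      rw [show Sym2.diagSet = {e : Sym2 (Fin q) | e.IsDiag} from rfl, hsingle, Set.union_comm, Set.singleton_union]
    have hT'fin : T'.edgeSet.Finite := Set.toFinite _
    have hT'fs : hT'fin.toFinset = insert s(i,j) (hfin.toFinset.erase s(c,d)) := by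
      ext e
      rw [Set.Finite.mem_toFinset, hT'E, Finset.mem_insert, Finset.mem_erase,
        Set.Finite.mem_toFinset, Set.mem_insert_iff, Set.mem_diff, Set.mem_singleton_iff]
      tauto
    have hsumT : ∑ᶠ e ∈ T.edgeSet, w e = ∑ e ∈ hfin.toFinset, w e := by
      have h0 := finsum_mem_coe_finset w hfin.toFinset
      rw [Set.Finite.coe_toFinset] at h0
      exact h0
    have hsumT' : ∑ᶠ e ∈ T'.edgeSet, w e
        = w s(i,j) + ∑ e ∈ hfin.toFinset.erase s(c,d), w e := by
      have h0 := finsum_mem_coe_finset w hT'fin.toFinset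
      rw [Set.Finite.coe_toFinset] at h0
      rw [h0, hT'fs, Finset.sum_insert]
      intro hmem
      have := Finset.mem_of_mem_erase hmem
      rw [Set.Finite.mem_toFinset] at this
      exact heT this
    have herase : ∑ e ∈ hfin.toFinset.erase s(c,d), w e + w s(c,d)
        = ∑ e ∈ hfin.toFinset, w e :=
      Finset.sum_erase_add _ _ (hfin.mem_toFinset.mpr hfT)
    have hkey := hmax T' le_top htree'
    rw [hsumT, hsumT'] at hkey
    linarith


end Betti0Aux

open SimpleGraph

/-- **Betti-0 counts the maximum-spanning-tree edges below threshold.** For the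
complete graph on `q ≥ 2` vertices with pairwise distinct positive edge weights and
maximum spanning tree `T`, for every `ε ≥ 0` the number of connected components of
the threshold graph satisfies `β₀(ε) = 1 + #{edges of T with weight ≤ ε}`. -/
theorem betti0_eq_one_add_mst_edges (q : ℕ) (hq : 2 ≤ q) (w : Sym2 (Fin q) → ℝ)
    (hpos : ∀ e : Sym2 (Fin q), ¬ e.IsDiag → 0 < w e)
    (hinj : ∀ e f : Sym2 (Fin q), ¬ e.IsDiag → ¬ f.IsDiag → w e = w f → e = f)
    (T : SimpleGraph (Fin q)) (hT : IsMaxSpanningTree ⊤ w T) :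
    ∀ ε : ℝ, 0 ≤ ε →
      betti0 w ε = 1 + {e : Sym2 (Fin q) | e ∈ T.edgeSet ∧ w e ≤ ε}.ncard := by
  intro ε hε
  classical
  obtain ⟨-, htree, hmax⟩ := hT
  set Tε := thresholdOf T w ε with hTεdef
  set Gε := thresholdGraph w ε with hGεdef
  have hle : Tε ≤ Gε := by
    intro u v h
    exact ⟨h.1.ne, h.2⟩
  have hreach : ∀ u v : Fin q, Gε.Reachable u v → Tε.Reachable u v := by
    intro u v hr
    obtain ⟨p⟩ := hr
    induction p with
    | nil => exact Reachable.refl _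
    | @cons x y z h p ih =>
      have h' : x ≠ y ∧ ε < w s(x, y) := h
      obtain ⟨hxy, hwxy⟩ := h'
      obtain ⟨p0⟩ := htree.1.preconnected x y
      have hsub : ∀ f ∈ (p0.toPath : T.Walk x y).edges, f ∈ Tε.edgeSet := by
        intro f hfmem
        have h2 : f ∈ T.edgeSet := (p0.toPath : T.Walk x y).edges_subset_edgeSet hfmem
        induction f using Sym2.ind with
        | _ c d =>
          have h1 : w s(x, y) ≤ w s(c, d) :=
            Betti0Aux.mst_path_edge_weight w T htree hmax hxy
              (p0.toPath : T.Walk x y) p0.toPath.2 hfmem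
          exact (Tε.mem_edgeSet).mpr ⟨(T.mem_edgeSet).mp h2, lt_of_lt_of_le hwxy h1⟩
      exact (((p0.toPath : T.Walk x y).transfer Tε hsub).reachable).trans ih
  have hcard1 : Nat.card Tε.ConnectedComponent = Nat.card Gε.ConnectedComponent :=
    Betti0Aux.card_cc_eq hle hreach
  have hTle : Tε ≤ T := fun u v h => h.1
  have hacy : Tε.IsAcyclic := fun v c hc => htree.2 (c.mapLe hTle) (hc.mapLe hTle)
  set S := {e : Sym2 (Fin q) | e ∈ T.edgeSet ∧ w e ≤ ε} with hSdef
  have hedge : Tε.edgeSet = T.edgeSet \ S := by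
    ext e
    induction e using Sym2.ind with
    | _ x y =>
      show Tε.Adj x y ↔ _
      rw [Set.mem_diff, hSdef, Set.mem_setOf_eq, T.mem_edgeSet]
      constructor
      · rintro ⟨h1, h2⟩
        exact ⟨h1, fun hc => absurd h2 (not_lt.mpr hc.2)⟩
      · rintro ⟨h1, h2⟩
        refine ⟨h1, ?_⟩
        by_contra hc
        exact h2 ⟨h1, le_of_not_gt hc⟩
  have hSsub : S ⊆ T.edgeSet := fun e he => he.1
  have hTfin : T.edgeSet.Finite := Set.toFinite _
  letI : Fintype T.edgeSet := Fintype.ofFinite _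
  have hTcard : T.edgeSet.ncard + 1 = q := by
    have h1 := htree.card_edgeFinset
    rw [Fintype.card_fin] at h1
    rw [Set.ncard_eq_toFinset_card']
    exact h1
  have hScard : S.ncard ≤ T.edgeSet.ncard := Set.ncard_le_ncard hSsub hTfin
  have hTεcard : Tε.edgeSet.ncard = T.edgeSet.ncard - S.ncard := by
    rw [hedge, Set.ncard_diff hSsub]
  have hcount := Betti0Aux.card_cc_acyclic Tε.edgeSet.ncard Tε hacy rfl
  rw [Fintype.card_fin] at hcount
  show Nat.card Gε.ConnectedComponent = 1 + S.ncard
  omega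
end
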